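/- The map f sending each 1324-avoiding permutation p of {1,...,n} to the pair (w(p), z(p)) of type-words is injective, where w(p)_i is the type (A, B, C, or D) of the entry in position i and z(p)_i is the type of the entry with value i. -/
import Mathlib


inductive Letter | A | B | C | D
deriving DecidableEq

def NoCB (w : List Letter) : Prop :=
  List.Chain' (fun a b => ¬(a = Letter.C ∧ b = Letter.B)) w

noncomputable def hword (n : ℕ) : ℕ :=
  Nat.card {w : List Letter // w.length = n ∧ NoCB w}
def redCond (p : ℕ → ℕ) (c : List Bool) (i : ℕ) : Bool :=
  decide (¬ ∃ j < i, ∃ k < i, j < k ∧ c.getD j false = true ∧ c.getD k false = true ∧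
      p j < p i ∧ p i < p k) &&
  decide (¬ ∃ j < i, c.getD j false = false ∧ p j < p i)

def colorsAux (p : ℕ → ℕ) : ℕ → List Bool
  | 0 => []
  | i+1 => colorsAux p i ++ [redCond p (colorsAux p i) i]

/-- `isRed p i = true` iff the greedy procedure colors the entry in position `i` red. -/
def isRed (p : ℕ → ℕ) (i : ℕ) : Bool := (colorsAux p (i+1)).getD i false

/-- The type of the entry in position `i` of a permutation of `{0,...,n-1}`:
`A` = red left-to-right minimum of the red subsequence, `B` = other red,
`D` = blue right-to-left maximum of the blue subsequence, `C` = other blue. -/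
def typeOf (n : ℕ) (p : ℕ → ℕ) (i : ℕ) : Letter :=
  if isRed p i then
    if ∀ j < i, isRed p j = true → p i < p j then Letter.A else Letter.B
  else
    if ∀ j < n, i < j → isRed p j = false → p j < p i then Letter.D else Letter.C

def toNatFun {n : ℕ} (p : Equiv.Perm (Fin n)) : ℕ → ℕ :=
  fun i => if h : i < n then (p ⟨i, h⟩ : ℕ) else i

def Avoids1324 {n : ℕ} (p : Equiv.Perm (Fin n)) : Prop :=
  ¬ ∃ i₁ i₂ i₃ i₄ : Fin n, i₁ < i₂ ∧ i₂ < i₃ ∧ i₃ < i₄ ∧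
    p i₁ < p i₃ ∧ p i₃ < p i₂ ∧ p i₂ < p i₄

/-- The word `w(p)`: types by position. -/
def wWord {n : ℕ} (p : Equiv.Perm (Fin n)) (i : Fin n) : Letter :=
  typeOf n (toNatFun p) i

/-- The word `z(p)`: types by value. -/
def zWord {n : ℕ} (p : Equiv.Perm (Fin n)) (v : Fin n) : Letter :=
  typeOf n (toNatFun p) (p.symm v)

lemma colorsAux_length (f : ℕ → ℕ) (i : ℕ) : (colorsAux f i).length = i := by
  induction i with
  | zero => rfl
  | succ i ih => simp [colorsAux, ih]

lemma colorsAux_getD (f : ℕ → ℕ) {j i : ℕ} (h : j < i) :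
    (colorsAux f i).getD j false = isRed f j := by
  induction i with
  | zero => omega
  | succ i ih =>
    rcases Nat.lt_or_ge j i with h' | h'
    · rw [colorsAux, List.getD_append _ _ _ _ (by rw [colorsAux_length]; exact h'), ih h']
    · have hj : j = i := by omega
      subst hj
      rfl

lemma isRed_eq (f : ℕ → ℕ) (i : ℕ) : isRed f i = redCond f (colorsAux f i) i := by
  show (colorsAux f i ++ [redCond f (colorsAux f i) i]).getD i false = _
  have : (colorsAux f i).length = i := colorsAux_length f i
  rw [List.getD_eq_getElem?_getD, List.getElem?_append_right (by omega)]
  simp [this]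

lemma isRed_iff (f : ℕ → ℕ) (i : ℕ) : isRed f i = true ↔
    (¬ ∃ j < i, ∃ k < i, j < k ∧ isRed f j = true ∧ isRed f k = true ∧
      f j < f i ∧ f i < f k) ∧ ¬ ∃ j < i, isRed f j = false ∧ f j < f i := by
  rw [isRed_eq, redCond, Bool.and_eq_true, decide_eq_true_iff, decide_eq_true_iff]
  constructor
  · rintro ⟨h1, h2⟩
    constructor
    · rintro ⟨j, hj, k, hk, hjk, rj, rk, v1, v2⟩
      exact h1 ⟨j, hj, k, hk, hjk, by rw [colorsAux_getD f hj]; exact rj,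
        by rw [colorsAux_getD f hk]; exact rk, v1, v2⟩
    · rintro ⟨j, hj, rj, v⟩
      exact h2 ⟨j, hj, by rw [colorsAux_getD f hj]; exact rj, v⟩
  · rintro ⟨h1, h2⟩
    constructor
    · rintro ⟨j, hj, k, hk, hjk, rj, rk, v1, v2⟩
      exact h1 ⟨j, hj, k, hk, hjk, by rw [colorsAux_getD f hj] at rj; exact rj,
        by rw [colorsAux_getD f hk] at rk; exact rk, v1, v2⟩
    · rintro ⟨j, hj, rj, v⟩
      exact h2 ⟨j, hj, by rw [colorsAux_getD f hj] at rj; exact rj, v⟩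

/-- A red entry cannot have red `j < i < k` (positions `j<i<k` all with colors as shown)
with `f j < f k < f i` and... the redness of `k` forbids red `j < i < k` with `f j < f k < f i`. -/
lemma red_no_132 {f : ℕ → ℕ} {j i k : ℕ} (hk : isRed f k = true)
    (h1 : j < i) (h2 : i < k) (hrj : isRed f j = true) (hri : isRed f i = true)
    (v1 : f j < f k) (v2 : f k < f i) : False :=
  ((isRed_iff f k).1 hk).1 ⟨j, by omega, i, h2, h1, hrj, hri, v1, v2⟩

lemma red_after_blue {f : ℕ → ℕ} {b r : ℕ} (hb : isRed f b = false)
    (hr : isRed f r = true) (hbr : b < r) (hne : f b ≠ f r) : f r < f b := by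
  have := ((isRed_iff f r).1 hr).2
  push_neg at this
  have := this b hbr hb
  omega

lemma blue_chain {f : ℕ → ℕ} {b : ℕ} (hb : isRed f b = false) :
    ∃ j k b₀, j < k ∧ k < b₀ ∧ b₀ ≤ b ∧ isRed f j = true ∧ isRed f k = true ∧
      isRed f b₀ = false ∧ f j < f b₀ ∧ f b₀ < f k ∧ f b₀ ≤ f b := by
  induction b using Nat.strong_induction_on with
  | _ b ih =>
    have h := (isRed_iff f b).not.1 (by simp [hb])
    rw [not_and_or, not_not, not_not] at h
    rcases h with ⟨j, hj, k, hk, hjk, rj, rk, v1, v2⟩ | ⟨j, hj, rj, v⟩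
    · exact ⟨j, k, b, hjk, hk, le_rfl, rj, rk, hb, v1, v2, le_rfl⟩
    · obtain ⟨j', k', b₀, h1, h2, h3, h4, h5, h6, h7, h8, h9⟩ := ih j hj rj
      exact ⟨j', k', b₀, h1, h2, by omega, h4, h5, h6, h7, h8, by omega⟩

lemma typeOf_red {n : ℕ} {f : ℕ → ℕ} {i : ℕ} :
    isRed f i = true ↔ (typeOf n f i = Letter.A ∨ typeOf n f i = Letter.B) := by
  unfold typeOf
  split_ifs <;> simp_all

lemma typeOf_A {n : ℕ} {f : ℕ → ℕ} {i : ℕ} :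
    typeOf n f i = Letter.A ↔
      isRed f i = true ∧ ∀ j < i, isRed f j = true → f i < f j := by
  unfold typeOf
  split_ifs <;> simp_all

lemma typeOf_B {n : ℕ} {f : ℕ → ℕ} {i : ℕ} :
    typeOf n f i = Letter.B ↔
      isRed f i = true ∧ ¬ ∀ j < i, isRed f j = true → f i < f j := by
  unfold typeOf
  split_ifs <;> simp_all

lemma typeOf_D {n : ℕ} {f : ℕ → ℕ} {i : ℕ} :
    typeOf n f i = Letter.D ↔
      isRed f i = false ∧ ∀ j < n, i < j → isRed f j = false → f j < f i := by
  unfold typeOf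
  split_ifs <;> simp_all

lemma typeOf_C {n : ℕ} {f : ℕ → ℕ} {i : ℕ} :
    typeOf n f i = Letter.C ↔
      isRed f i = false ∧ ¬ ∀ j < n, i < j → isRed f j = false → f j < f i := by
  unfold typeOf
  split_ifs <;> simp_all

lemma toNatFun_lt {n : ℕ} (p : Equiv.Perm (Fin n)) {i : ℕ} (h : i < n) :
    toNatFun p i = (p ⟨i, h⟩ : ℕ) := dif_pos h

lemma toNatFun_inj {n : ℕ} (p : Equiv.Perm (Fin n)) {i j : ℕ} (hi : i < n) (hj : j < n)
    (h : toNatFun p i = toNatFun p j) : i = j := by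
  rw [toNatFun_lt p hi, toNatFun_lt p hj] at h
  have := p.injective (Fin.ext h)
  exact congrArg Fin.val this

lemma toNatFun_symm {n : ℕ} (p : Equiv.Perm (Fin n)) (v : Fin n) :
    toNatFun p ((p.symm v : Fin n) : ℕ) = (v : ℕ) := by
  rw [toNatFun_lt p (p.symm v).isLt]
  simp

lemma avoid_apply {n : ℕ} {p : Equiv.Perm (Fin n)} (hp : Avoids1324 p) {a b c d : ℕ}
    (hab : a < b) (hbc : b < c) (hcd : c < d) (hd : d < n)
    (v1 : toNatFun p a < toNatFun p c) (v2 : toNatFun p c < toNatFun p b)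
    (v3 : toNatFun p b < toNatFun p d) : False := by
  have ha : a < n := by omega
  have hb : b < n := by omega
  have hc : c < n := by omega
  rw [toNatFun_lt p ha, toNatFun_lt p hc] at v1
  rw [toNatFun_lt p hc, toNatFun_lt p hb] at v2
  rw [toNatFun_lt p hb, toNatFun_lt p hd] at v3
  exact hp ⟨⟨a, ha⟩, ⟨b, hb⟩, ⟨c, hc⟩, ⟨d, hd⟩, hab, hbc, hcd, v1, v2, v3⟩

lemma no_blue_213 {n : ℕ} {p : Equiv.Perm (Fin n)} (hp : Avoids1324 p) {x y z : ℕ}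
    (hxy : x < y) (hyz : y < z) (hzn : z < n)
    (bx : isRed (toNatFun p) x = false) (bz : isRed (toNatFun p) z = false)
    (by' : isRed (toNatFun p) y = false)
    (v1 : toNatFun p y < toNatFun p x) (v2 : toNatFun p x < toNatFun p z) : False := by
  set f := toNatFun p with hf
  obtain ⟨j, k, y₀, h1, h2, h3, rj, rk, by0, w1, w2, w3⟩ := blue_chain by'
  rcases Nat.lt_or_ge (f k) (f z) with hc | hc
  · exact avoid_apply hp h1 h2 (by omega) hzn w1 w2 hc
  · -- f z ≤ f k, so x cannot be before k (blue before red forces smaller red)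
    have hxk : ¬ x < k := by
      intro hlt
      have hne : f x ≠ f k := by omega
      have := red_after_blue bx rk hlt hne
      omega
    have hkx : k < x := by
      rcases Nat.lt_or_ge k x with h | h
      · exact h
      · have : k = x := by omega
        subst this
        rw [rk] at bx
        exact absurd bx (by simp)
    exact avoid_apply hp (by omega : j < x) hxy hyz hzn (by rw [← hf]; omega) v1 v2

lemma typeOf_blue {n : ℕ} {f : ℕ → ℕ} {i : ℕ} :
    isRed f i = false ↔ (typeOf n f i = Letter.C ∨ typeOf n f i = Letter.D) := by
  unfold typeOf
  split_ifs <;> simp_all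

section Steps
variable {n : ℕ} (p q : Equiv.Perm (Fin n))

lemma red_A_le
    (hz : ∀ v : Fin n, typeOf n (toNatFun p) ((p.symm v : Fin n) : ℕ)
        = typeOf n (toNatFun q) ((q.symm v : Fin n) : ℕ))
    {i : ℕ} (hi : i < n)
    (hA : typeOf n (toNatFun p) i = Letter.A) (hA' : typeOf n (toNatFun q) i = Letter.A)
    (IH : ∀ j < i, isRed (toNatFun p) j = true → toNatFun p j = toNatFun q j) :
    toNatFun q i ≤ toNatFun p i := by
  set v : Fin n := q ⟨i, hi⟩ with hv
  have hsymmq : ((q.symm v : Fin n) : ℕ) = i := by simp [hv]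
  have h1 : typeOf n (toNatFun p) ((p.symm v : Fin n) : ℕ) = Letter.A := by
    rw [hz v, hsymmq]; exact hA'
  set k := ((p.symm v : Fin n) : ℕ) with hk
  have hkn : k < n := (p.symm v).isLt
  have hpk : toNatFun p k = (v : ℕ) := toNatFun_symm p v
  have hqi : toNatFun q i = (v : ℕ) := by rw [toNatFun_lt q hi]
  rcases lt_trichotomy k i with h | h | h
  · exfalso
    have hredk : isRed (toNatFun p) k = true := typeOf_red.2 (Or.inl h1)
    have h2 := IH k h hredk
    have : k = i := toNatFun_inj q hkn hi (by rw [← h2, hpk, hqi])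
    omega
  · rw [hqi, ← h, hpk]
  · have hri : isRed (toNatFun p) i = true := typeOf_red.2 (Or.inl hA)
    have := (typeOf_A.1 h1).2 i h hri
    omega

lemma red_B_le
    (hz : ∀ v : Fin n, typeOf n (toNatFun p) ((p.symm v : Fin n) : ℕ)
        = typeOf n (toNatFun q) ((q.symm v : Fin n) : ℕ))
    (hcol : ∀ j < n, isRed (toNatFun p) j = isRed (toNatFun q) j)
    {i : ℕ} (hi : i < n)
    (hB : typeOf n (toNatFun p) i = Letter.B) (hB' : typeOf n (toNatFun q) i = Letter.B)
    (IH : ∀ j < i, isRed (toNatFun p) j = true → toNatFun p j = toNatFun q j) :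
    toNatFun p i ≤ toNatFun q i := by
  by_contra hcon
  push_neg at hcon
  set v : Fin n := q ⟨i, hi⟩ with hv
  have hsymmq : ((q.symm v : Fin n) : ℕ) = i := by simp [hv]
  have h1 : typeOf n (toNatFun p) ((p.symm v : Fin n) : ℕ) = Letter.B := by
    rw [hz v, hsymmq]; exact hB'
  set k := ((p.symm v : Fin n) : ℕ) with hk
  have hkn : k < n := (p.symm v).isLt
  have hpk : toNatFun p k = (v : ℕ) := toNatFun_symm p v
  have hqi : toNatFun q i = (v : ℕ) := by rw [toNatFun_lt q hi]
  have hredk : isRed (toNatFun p) k = true := typeOf_red.2 (Or.inr h1)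
  rcases lt_trichotomy k i with h | h | h
  · have h2 := IH k h hredk
    have : k = i := toNatFun_inj q hkn hi (by rw [← h2, hpk, hqi])
    omega
  · rw [h] at hpk
    omega
  · -- i < k : find red j < i with Q j < Q i, get red 132 pattern at k
    obtain ⟨hri', hno⟩ := typeOf_B.1 hB'
    push_neg at hno
    obtain ⟨j, hj, hrj', hle⟩ := hno
    have hrj : isRed (toNatFun p) j = true := by rw [hcol j (by omega)]; exact hrj'
    have hjne : toNatFun q j ≠ toNatFun q i := fun he => by
      have := toNatFun_inj q (by omega) hi he; omega
    have hjlt : toNatFun q j < toNatFun q i := by omega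
    have h2 := IH j hj hrj
    have hri : isRed (toNatFun p) i = true := typeOf_red.2 (Or.inr hB)
    exact red_no_132 hredk hj h hrj hri (by omega) (by omega)

lemma blue_D_le
    (hz : ∀ v : Fin n, typeOf n (toNatFun p) ((p.symm v : Fin n) : ℕ)
        = typeOf n (toNatFun q) ((q.symm v : Fin n) : ℕ))
    {i : ℕ} (hi : i < n)
    (hD : typeOf n (toNatFun p) i = Letter.D) (hD' : typeOf n (toNatFun q) i = Letter.D)
    (IH : ∀ j, i < j → j < n → isRed (toNatFun p) j = false → toNatFun p j = toNatFun q j) :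
    toNatFun p i ≤ toNatFun q i := by
  set v : Fin n := q ⟨i, hi⟩ with hv
  have hsymmq : ((q.symm v : Fin n) : ℕ) = i := by simp [hv]
  have h1 : typeOf n (toNatFun p) ((p.symm v : Fin n) : ℕ) = Letter.D := by
    rw [hz v, hsymmq]; exact hD'
  set k := ((p.symm v : Fin n) : ℕ) with hk
  have hkn : k < n := (p.symm v).isLt
  have hpk : toNatFun p k = (v : ℕ) := toNatFun_symm p v
  have hqi : toNatFun q i = (v : ℕ) := by rw [toNatFun_lt q hi]
  rcases lt_trichotomy k i with h | h | h
  · have hbi : isRed (toNatFun p) i = false := typeOf_blue.2 (Or.inr hD)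
    have := (typeOf_D.1 h1).2 i hi h hbi
    omega
  · rw [hqi, ← h, hpk]
  · exfalso
    have hbk : isRed (toNatFun p) k = false := typeOf_blue.2 (Or.inr h1)
    have h2 := IH k h hkn hbk
    have : k = i := toNatFun_inj q hkn hi (by rw [← h2, hpk, hqi])
    omega

lemma blue_C_le (hp : Avoids1324 p)
    (hz : ∀ v : Fin n, typeOf n (toNatFun p) ((p.symm v : Fin n) : ℕ)
        = typeOf n (toNatFun q) ((q.symm v : Fin n) : ℕ))
    (hcol : ∀ j < n, isRed (toNatFun p) j = isRed (toNatFun q) j)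
    {i : ℕ} (hi : i < n)
    (hC : typeOf n (toNatFun p) i = Letter.C) (hC' : typeOf n (toNatFun q) i = Letter.C)
    (IH : ∀ j, i < j → j < n → isRed (toNatFun p) j = false → toNatFun p j = toNatFun q j) :
    toNatFun q i ≤ toNatFun p i := by
  by_contra hcon
  push_neg at hcon
  set v : Fin n := q ⟨i, hi⟩ with hv
  have hsymmq : ((q.symm v : Fin n) : ℕ) = i := by simp [hv]
  have h1 : typeOf n (toNatFun p) ((p.symm v : Fin n) : ℕ) = Letter.C := by
    rw [hz v, hsymmq]; exact hC'
  set k := ((p.symm v : Fin n) : ℕ) with hk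
  have hkn : k < n := (p.symm v).isLt
  have hpk : toNatFun p k = (v : ℕ) := toNatFun_symm p v
  have hqi : toNatFun q i = (v : ℕ) := by rw [toNatFun_lt q hi]
  have hbk : isRed (toNatFun p) k = false := typeOf_blue.2 (Or.inl h1)
  rcases lt_trichotomy k i with h | h | h
  · -- k < i blue with p-value Q i > P i; find blue c > i with Q i < Q c
    obtain ⟨hbi', hno⟩ := typeOf_C.1 hC'
    push_neg at hno
    obtain ⟨c, hcn, hic, hbc', hle⟩ := hno
    have hbc : isRed (toNatFun p) c = false := by rw [hcol c hcn]; exact hbc'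
    have hcne : toNatFun q c ≠ toNatFun q i := fun he => by
      have := toNatFun_inj q hcn hi he; omega
    have h2 := IH c hic hcn hbc
    have hbi : isRed (toNatFun p) i = false := typeOf_blue.2 (Or.inl hC)
    exact no_blue_213 hp h hic hcn hbk hbc hbi (by omega) (by omega)
  · rw [h] at hpk
    omega
  · exfalso
    have h2 := IH k h hkn hbk
    have : k = i := toNatFun_inj q hkn hi (by rw [← h2, hpk, hqi])
    omega

end Steps

/-- The map p ↦ (w(p), z(p)) is injective on 1324-avoiding permutations. -/
theorem stmt12 {n : ℕ} (p q : Equiv.Perm (Fin n))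
    (hp : Avoids1324 p) (hq : Avoids1324 q)
    (hw : wWord p = wWord q) (hz : zWord p = zWord q) : p = q := by
  have hw' : ∀ i, i < n → typeOf n (toNatFun p) i = typeOf n (toNatFun q) i :=
    fun i hi => congrFun hw ⟨i, hi⟩
  have hz' : ∀ v : Fin n, typeOf n (toNatFun p) ((p.symm v : Fin n) : ℕ)
      = typeOf n (toNatFun q) ((q.symm v : Fin n) : ℕ) := fun v => congrFun hz v
  have hz'' : ∀ v : Fin n, typeOf n (toNatFun q) ((q.symm v : Fin n) : ℕ)
      = typeOf n (toNatFun p) ((p.symm v : Fin n) : ℕ) := fun v => (hz' v).symm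
  have hcol : ∀ j, j < n → isRed (toNatFun p) j = isRed (toNatFun q) j := by
    intro j hj
    cases hr : isRed (toNatFun p) j with
    | true =>
      have h1 := (typeOf_red (n := n)).1 hr
      rw [hw' j hj] at h1
      exact ((typeOf_red (n := n)).2 h1).symm
    | false =>
      have h1 := (typeOf_blue (n := n)).1 hr
      rw [hw' j hj] at h1
      exact ((typeOf_blue (n := n)).2 h1).symm
  have hcol' : ∀ j, j < n → isRed (toNatFun q) j = isRed (toNatFun p) j :=
    fun j hj => (hcol j hj).symm
  have redClaim : ∀ i, i < n → isRed (toNatFun p) i = true →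
      toNatFun p i = toNatFun q i := by
    intro i
    induction i using Nat.strong_induction_on with
    | _ i ih =>
      intro hi hred
      have IH : ∀ j < i, isRed (toNatFun p) j = true → toNatFun p j = toNatFun q j :=
        fun j hj => ih j hj (by omega)
      have IHq : ∀ j < i, isRed (toNatFun q) j = true → toNatFun q j = toNatFun p j :=
        fun j hj hr => (IH j hj (by rw [hcol j (by omega)]; exact hr)).symm
      rcases (typeOf_red (n := n)).1 hred with hA | hB
      · have hA' : typeOf n (toNatFun q) i = Letter.A := by rw [← hw' i hi]; exact hA
        exact le_antisymm (red_A_le q p hz'' hi hA' hA IHq) (red_A_le p q hz' hi hA hA' IH)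
      · have hB' : typeOf n (toNatFun q) i = Letter.B := by rw [← hw' i hi]; exact hB
        exact le_antisymm (red_B_le p q hz' hcol hi hB hB' IH)
          (red_B_le q p hz'' hcol' hi hB' hB IHq)
  have blueClaim : ∀ d i, i < n → n - i = d → isRed (toNatFun p) i = false →
      toNatFun p i = toNatFun q i := by
    intro d
    induction d using Nat.strong_induction_on with
    | _ d ih =>
      intro i hi hd hblue
      have IH : ∀ j, i < j → j < n → isRed (toNatFun p) j = false →
          toNatFun p j = toNatFun q j :=
        fun j h1 h2 => ih (n - j) (by omega) j h2 rfl
      have IHq : ∀ j, i < j → j < n → isRed (toNatFun q) j = false →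
          toNatFun q j = toNatFun p j :=
        fun j h1 h2 hr => (IH j h1 h2 (by rw [hcol j h2]; exact hr)).symm
      rcases (typeOf_blue (n := n)).1 hblue with hC | hD
      · have hC' : typeOf n (toNatFun q) i = Letter.C := by rw [← hw' i hi]; exact hC
        exact le_antisymm (blue_C_le q p hq hz'' hcol' hi hC' hC IHq)
          (blue_C_le p q hp hz' hcol hi hC hC' IH)
      · have hD' : typeOf n (toNatFun q) i = Letter.D := by rw [← hw' i hi]; exact hD
        exact le_antisymm (blue_D_le p q hz' hi hD hD' IH)
          (blue_D_le q p hz'' hi hD' hD IHq)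
  apply Equiv.ext
  intro x
  have hx : (x : ℕ) < n := x.isLt
  have key : toNatFun p x = toNatFun q x := by
    cases hr : isRed (toNatFun p) x with
    | true => exact redClaim x hx hr
    | false => exact blueClaim (n - x) x hx rfl hr
  rw [toNatFun_lt p hx, toNatFun_lt q hx] at key
  exact Fin.ext (by simpa using key)
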